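/- There is a function g : ℤ₊ → ℝ₊ with g(k₀) → ∞ as k₀ → ∞ such that, for all n > k₀, N = 2^n, and all x, y ∈ V_N with d^N(x,y) ≥ 2^{√k₀}, one has ρ_{N,k₀}(x,y) ≤ ρ_{N,0}(x,y) − g(k₀). (In fact one may take g(k₀) = √k₀ − 1.) -/

import Mathlib

open MeasureTheory ProbabilityTheory
open scoped ENNReal NNReal Classical

noncomputable section

/-- The box `V_N = ([0,N-1] ∩ ℤ)²`. -/
def V (N : ℕ) : Finset (ℤ × ℤ) :=
  Finset.Icc 0 ((N : ℤ) - 1) ×ˢ Finset.Icc 0 ((N : ℤ) - 1)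

/-- The interior `V_N° = ((0,N-1) ∩ ℤ)²`. -/
def Vint (N : ℕ) : Finset (ℤ × ℤ) :=
  Finset.Ioo 0 ((N : ℤ) - 1) ×ˢ Finset.Ioo 0 ((N : ℤ) - 1)

/-- The maximum of `f` over a finite set (`0` for the empty set). -/
def fmax (s : Finset (ℤ × ℤ)) (f : ℤ × ℤ → ℝ) : ℝ :=
  if h : s.Nonempty then s.sup' h f else 0

/-- The four nearest-neighbour steps of simple random walk on ℤ². -/
def nbrs : Finset (ℤ × ℤ) := {(1, 0), (-1, 0), (0, 1), (0, -1)}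

/-- `killedKernel N m x y = P^x(w_j ∈ V_N° for all j < m, and w_m = y)`, the m-step
transition function of simple random walk killed upon leaving `V_N°`. -/
def killedKernel (N : ℕ) : ℕ → ℤ × ℤ → ℤ × ℤ → ℝ
  | 0, x, y => if x = y then 1 else 0
  | m + 1, x, y =>
      if x ∈ Vint N then (1 / 4 : ℝ) * ∑ d ∈ nbrs, killedKernel N m (x + d) y else 0

/-- The Green function `G_N(x,y) = E^x[∑_{m=0}^τ 1_{w_m = y}]`, with `G_N(x,·) = 0`
for `x ∈ ∂V_N`. -/
def greenFn (N : ℕ) (x y : ℤ × ℤ) : ℝ :=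
  if x ∈ Vint N then ∑' m : ℕ, killedKernel N m x y else 0

/-- `x ∼_N y`, i.e. `x - y ∈ (Nℤ)²`. -/
def simRel (N : ℕ) (x y : ℤ × ℤ) : Prop :=
  (N : ℤ) ∣ (x.1 - y.1) ∧ (N : ℤ) ∣ (x.2 - y.2)

/-- `torusKernel N m x y = P^x(w_m ∼_N y)` for simple random walk on ℤ². -/
def torusKernel (N : ℕ) : ℕ → ℤ × ℤ → ℤ × ℤ → ℝ
  | 0, x, y => if simRel N x y then 1 else 0
  | m + 1, x, y => (1 / 4 : ℝ) * ∑ d ∈ nbrs, torusKernel N m (x + d) y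

/-- The torus Green function `Ḡ_N(x,y) = E^x[∑_{m=0}^{τ'} 1_{w_m ∼_N y}]`, where `τ'` is
an independent exponential time of parameter `1/N²` (so `P(τ' ≥ m) = exp(-m/N²)`). -/
def torusGreen (N : ℕ) (x y : ℤ × ℤ) : ℝ :=
  ∑' m : ℕ, Real.exp (-(m : ℝ) / (N : ℝ) ^ 2) * torusKernel N m x y

/-- Euclidean norm on ℤ². -/
def euclNorm (v : ℤ × ℤ) : ℝ := Real.sqrt ((v.1 : ℝ) ^ 2 + (v.2 : ℝ) ^ 2)

/-- ℓ∞ norm on ℤ². -/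
def supNorm (v : ℤ × ℤ) : ℝ := max |(v.1 : ℝ)| |(v.2 : ℝ)|

/-- Torus (euclidean) distance `d^N(x,y) = min{‖x-z‖ : z ∼_N y}`. -/
def dN (N : ℕ) (x y : ℤ × ℤ) : ℝ :=
  sInf {r : ℝ | ∃ z : ℤ × ℤ, simRel N z y ∧ r = euclNorm (x - z)}

/-- Torus ℓ∞ distance `d_∞^N(x,y) = min{‖x-z‖_∞ : z ∼_N y}`. -/
def dNinf (N : ℕ) (x y : ℤ × ℤ) : ℝ :=
  sInf {r : ℝ | ∃ z : ℤ × ℤ, simRel N z y ∧ r = supNorm (x - z)}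

/-- `{X_x}_{x ∈ s}` is a centered Gaussian field with covariance `G` on `s`: every finite
linear combination of the `X_x`, `x ∈ s`, is a centered Gaussian variable, and the
covariances on `s` are given by `G`. -/
def IsCenteredGaussianFieldOn {Ω : Type} [MeasurableSpace Ω] (P : Measure Ω)
    (X : ℤ × ℤ → Ω → ℝ) (s : Finset (ℤ × ℤ)) (G : ℤ × ℤ → ℤ × ℤ → ℝ) : Prop :=
  (∀ x ∈ s, Measurable (X x)) ∧
  (∀ t : Finset (ℤ × ℤ), t ⊆ s → ∀ c : ℤ × ℤ → ℝ, ∃ v : ℝ≥0,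
      Measure.map (fun ω => ∑ i ∈ t, c i * X i ω) P = gaussianReal 0 v) ∧
  ∀ x ∈ s, ∀ y ∈ s, ∫ ω, X x ω * X y ω ∂P = G x y

/-- The lower-left corners of the squares of side `2^k` (elements of `B_k`) containing `z`. -/
def corners (k : ℕ) (z : ℤ × ℤ) : Finset (ℤ × ℤ) :=
  Finset.Icc (z - ((2 : ℤ) ^ k - 1, (2 : ℤ) ^ k - 1)) z

/-- Reduction of a corner modulo `N`, identifying a square of `B_k` with the unique
`B' ∈ B_k^N` with `B ∼_N B'`. -/
def modN (N : ℕ) (v : ℤ × ℤ) : ℤ × ℤ := (v.1 % (N : ℤ), v.2 % (N : ℤ))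

/-- Partial sums of the MBRW: `∑_{k=lo}^{hi} ∑_{B ∈ B_k(z)} b_{k,B}^N`, where a square is
identified with its lower-left corner and `b^N_{k,B} = b_{k,B'}` for `B ∼_N B' ∈ B_k^N`.
In particular `mbrwSum N 0 n b = S^N`, `mbrwSum N k₀ n b = S^{N,k₀}` and
`mbrwSum N (n-j) n b = S^N(j)`. -/
def mbrwSum {Ω : Type} (N lo hi : ℕ) (b : ℕ → ℤ × ℤ → Ω → ℝ) (z : ℤ × ℤ) (ω : Ω) : ℝ :=
  ∑ k ∈ Finset.Icc lo hi, ∑ v ∈ corners k z, b k (modN N v) ω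

/-- `{b_{k,B}}_{0 ≤ k ≤ n, B ∈ B_k^N}` (squares identified with their lower-left corners,
which lie in `V_N`) is a family of independent centered Gaussian variables of variance
`2^{-2k}`: the family is jointly Gaussian and the covariances are
`E[b_{k,v} b_{k',v'}] = 2^{-2k} 1_{(k,v) = (k',v')}`. -/
def IsMBRWBase {Ω : Type} [MeasurableSpace Ω] (P : Measure Ω) (N n : ℕ)
    (b : ℕ → ℤ × ℤ → Ω → ℝ) : Prop :=
  (∀ k ≤ n, ∀ v ∈ V N, Measurable (b k v)) ∧
  (∀ t : Finset (ℕ × (ℤ × ℤ)), (∀ p ∈ t, p.1 ≤ n ∧ p.2 ∈ V N) →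
      ∀ c : ℕ × (ℤ × ℤ) → ℝ, ∃ v : ℝ≥0,
      Measure.map (fun ω => ∑ p ∈ t, c p * b p.1 p.2 ω) P = gaussianReal 0 v) ∧
  ∀ k k' : ℕ, ∀ v v' : ℤ × ℤ, k ≤ n → k' ≤ n → v ∈ V N → v' ∈ V N →
    ∫ ω, b k v ω * b k' v' ω ∂P = if k = k' ∧ v = v' then ((2 : ℝ) ^ (2 * k))⁻¹ else 0

/-- `V_N' = V_{N/2} + (N/4, N/4)`. -/
def V' (N : ℕ) : Finset (ℤ × ℤ) :=
  (V (N / 2)).image fun z => z + (((N / 4 : ℕ) : ℤ), ((N / 4 : ℕ) : ℤ))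

/-- `A_n = 2√(log 2)·n − (3/(4√(log 2)))·log n`. -/
def An (n : ℕ) : ℝ :=
  2 * Real.sqrt (Real.log 2) * n - 3 / (4 * Real.sqrt (Real.log 2)) * Real.log n

/-- The barrier `L_n(j)`: `L_n(0) = L_n(n) = 0`, `L_n(j) = c₅ log j` for `1 ≤ j ≤ ⌊n/2⌋`
and `L_n(j) = c₅ log (n-j)` for `⌊n/2⌋ < j ≤ n-1`. -/
def Lfun (c₅ : ℝ) (n j : ℕ) : ℝ :=
  if j = 0 ∨ j = n then 0
  else if j ≤ n / 2 then c₅ * Real.log j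
  else c₅ * Real.log ((n - j : ℕ) : ℝ)

/-! ### Auxiliary lemmas for `rho_truncation_gain` -/

lemma myIntMul {Ω : Type} [MeasurableSpace Ω] {P : Measure Ω} {f g : Ω → ℝ}
    (hf : MemLp f 2 P) (hg : MemLp g 2 P) :
    Integrable (fun ω => f ω * g ω) P := by
  refine Integrable.mono' ((hf.integrable_sq.add hg.integrable_sq).div_const 2)
    (hf.aestronglyMeasurable.mul hg.aestronglyMeasurable)
    (Filter.Eventually.of_forall fun ω => ?_)
  simp only [Real.norm_eq_abs, abs_mul, Pi.add_apply, Pi.div_apply]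
  nlinarith [sq_nonneg (|f ω| - |g ω|), sq_abs (f ω), sq_abs (g ω),
    abs_nonneg (f ω), abs_nonneg (g ω)]

lemma myExpand {Ω : Type} [MeasurableSpace Ω] {P : Measure Ω}
    {ι κ : Type} (s : Finset ι) (t : Finset κ) (F : ι → Ω → ℝ) (G : κ → Ω → ℝ)
    (hF : ∀ i ∈ s, MemLp (F i) 2 P) (hG : ∀ j ∈ t, MemLp (G j) 2 P) :
    ∫ ω, (∑ i ∈ s, F i ω) * (∑ j ∈ t, G j ω) ∂P
      = ∑ i ∈ s, ∑ j ∈ t, ∫ ω, F i ω * G j ω ∂P := by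
  have h : ∀ ω, (∑ i ∈ s, F i ω) * (∑ j ∈ t, G j ω) = ∑ i ∈ s, ∑ j ∈ t, F i ω * G j ω := by
    intro ω; rw [Finset.sum_mul_sum]
  simp_rw [h]
  rw [integral_finset_sum]
  · exact Finset.sum_congr rfl fun i hi => integral_finset_sum _ fun j hj =>
      myIntMul (hF i hi) (hG j hj)
  · exact fun i hi => integrable_finset_sum _ fun j hj => myIntMul (hF i hi) (hG j hj)

lemma modN_mem_V {N : ℕ} (hN : 0 < N) (v : ℤ × ℤ) : modN N v ∈ V N := by
  have hN' : (0 : ℤ) < (N : ℤ) := by exact_mod_cast hN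
  simp only [V, modN, Finset.mem_product, Finset.mem_Icc]
  refine ⟨⟨Int.emod_nonneg _ hN'.ne', ?_⟩, ⟨Int.emod_nonneg _ hN'.ne', ?_⟩⟩
  · have := Int.emod_lt_of_pos v.1 hN'; omega
  · have := Int.emod_lt_of_pos v.2 hN'; omega

lemma mem_corners {k : ℕ} {z v : ℤ × ℤ} :
    v ∈ corners k z ↔ (z.1 - ((2:ℤ)^k - 1) ≤ v.1 ∧ v.1 ≤ z.1) ∧
      (z.2 - ((2:ℤ)^k - 1) ≤ v.2 ∧ v.2 ≤ z.2) := by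
  simp only [corners, Finset.mem_Icc, Prod.le_def, Prod.fst_sub, Prod.snd_sub]
  constructor
  · rintro ⟨⟨h1, h2⟩, h3, h4⟩; exact ⟨⟨h1, h3⟩, ⟨h2, h4⟩⟩
  · rintro ⟨⟨h1, h2⟩, h3, h4⟩; exact ⟨⟨h1, h3⟩, ⟨h2, h4⟩⟩

lemma modN_dvd {N : ℕ} {v v' : ℤ × ℤ} (h : modN N v = modN N v') :
    (N:ℤ) ∣ (v.1 - v'.1) ∧ (N:ℤ) ∣ (v.2 - v'.2) := by
  simp only [modN, Prod.mk.injEq] at h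
  exact ⟨Int.ModEq.dvd (Int.ModEq.symm h.1), Int.ModEq.dvd (Int.ModEq.symm h.2)⟩

lemma modN_inj_corners {N k : ℕ} (hk : (2:ℤ)^k ≤ (N:ℤ)) {z v v' : ℤ × ℤ}
    (hv : v ∈ corners k z) (hv' : v' ∈ corners k z) (h : modN N v = modN N v') : v = v' := by
  obtain ⟨d1, d2⟩ := modN_dvd h
  rw [mem_corners] at hv hv'
  have h1 : v.1 = v'.1 := by
    have := Int.eq_zero_of_abs_lt_dvd d1 (by rw [abs_lt]; omega); omega
  have h2 : v.2 = v'.2 := by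
    have := Int.eq_zero_of_abs_lt_dvd d2 (by rw [abs_lt]; omega); omega
  exact Prod.ext h1 h2

lemma card_corners (k : ℕ) (z : ℤ × ℤ) : (corners k z).card = 2^k * 2^k := by
  rw [corners, Finset.Icc_prod_def, Finset.card_product]
  simp only [Prod.fst_sub, Prod.snd_sub, Int.card_Icc]
  have h : ∀ a : ℤ, (a + 1 - (a - ((2:ℤ)^k - 1))).toNat = 2^k := by
    intro a
    have he : (a + 1 - (a - ((2:ℤ)^k - 1))) = ((2^k : ℕ) : ℤ) := by push_cast; ring
    rw [he, Int.toNat_natCast]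
  rw [h, h]

lemma dN_le {N : ℕ} {x y z : ℤ × ℤ} (h : simRel N z y) : dN N x y ≤ euclNorm (x - z) := by
  apply csInf_le
  · refine ⟨0, fun r hr => ?_⟩
    obtain ⟨w, _, rfl⟩ := hr
    exact Real.sqrt_nonneg _
  · exact ⟨z, h, rfl⟩

lemma noOverlap {N k : ℕ} {x y : ℤ × ℤ} (hd : (2:ℝ)^(k+1) ≤ dN N x y)
    {v v' : ℤ × ℤ} (hv : v ∈ corners k x) (hv' : v' ∈ corners k y) :
    modN N v ≠ modN N v' := by
  intro h
  obtain ⟨d1, d2⟩ := modN_dvd h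
  set z : ℤ × ℤ := y + (v - v') with hz
  have hsim : simRel N z y := by
    constructor
    · simpa [hz] using d1
    · simpa [hz] using d2
  have hle := dN_le (x := x) hsim
  rw [mem_corners] at hv hv'
  have hb : euclNorm (x - z) < (2:ℝ)^(k+1) := by
    have e1 : (x - z).1 = (x.1 - v.1) - (y.1 - v'.1) := by simp [hz]; ring
    have e2 : (x - z).2 = (x.2 - v.2) - (y.2 - v'.2) := by simp [hz]; ring
    have a1 : |(x - z).1| ≤ (2:ℤ)^k - 1 := by rw [e1, abs_le]; omega
    have a2 : |(x - z).2| ≤ (2:ℤ)^k - 1 := by rw [e2, abs_le]; omega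
    have b1 : |((x - z).1 : ℝ)| ≤ (2:ℝ)^k - 1 := by exact_mod_cast a1
    have b2 : |((x - z).2 : ℝ)| ≤ (2:ℝ)^k - 1 := by exact_mod_cast a2
    have hpk : (0:ℝ) < 2^k := by positivity
    have hsq : ((x - z).1 : ℝ)^2 + ((x - z).2:ℝ)^2 < ((2:ℝ)^(k+1))^2 := by
      have s1 : ((x - z).1 : ℝ)^2 ≤ ((2:ℝ)^k - 1)^2 := by
        rw [← sq_abs]; exact pow_le_pow_left₀ (abs_nonneg _) b1 2
      have s2 : ((x - z).2 : ℝ)^2 ≤ ((2:ℝ)^k - 1)^2 := by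
        rw [← sq_abs]; exact pow_le_pow_left₀ (abs_nonneg _) b2 2
      have h4 : ((2:ℝ)^(k+1))^2 = 4 * ((2:ℝ)^k)^2 := by ring
      have h1k : (1:ℝ) ≤ 2^k := one_le_pow₀ one_le_two
      nlinarith [s1, s2, h1k]
    calc euclNorm (x - z) = Real.sqrt (((x - z).1 : ℝ)^2 + ((x - z).2:ℝ)^2) := rfl
      _ < Real.sqrt (((2:ℝ)^(k+1))^2) := Real.sqrt_lt_sqrt (by positivity) hsq
      _ = (2:ℝ)^(k+1) := Real.sqrt_sq (by positivity)
  linarith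

/-- Level-`k` field contribution at `z`. -/
def Lfn {Ω : Type} (N : ℕ) (bn : ℕ → ℤ × ℤ → Ω → ℝ) (k : ℕ) (z : ℤ × ℤ) (ω : Ω) : ℝ :=
  ∑ v ∈ corners k z, bn k (modN N v) ω

lemma covDelta {Ω : Type} [MeasurableSpace Ω] {P : Measure Ω} {f g h i : Ω → ℝ}
    (hf : MemLp f 2 P) (hg : MemLp g 2 P) (hh : MemLp h 2 P) (hi : MemLp i 2 P) :
    ∫ ω, (f ω - g ω) * (h ω - i ω) ∂P
      = ∫ ω, f ω * h ω ∂P - ∫ ω, f ω * i ω ∂P - ∫ ω, g ω * h ω ∂P + ∫ ω, g ω * i ω ∂P := by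
  have e : ∀ ω, (f ω - g ω) * (h ω - i ω)
      = (f ω * h ω - f ω * i ω) - (g ω * h ω - g ω * i ω) := fun ω => by ring
  simp_rw [e]
  have I1 : Integrable (fun ω => f ω * h ω - f ω * i ω) P := (myIntMul hf hh).sub (myIntMul hf hi)
  have I2 : Integrable (fun ω => g ω * h ω - g ω * i ω) P := (myIntMul hg hh).sub (myIntMul hg hi)
  have I3 : Integrable (fun ω => f ω * h ω) P := myIntMul hf hh
  have I4 : Integrable (fun ω => f ω * i ω) P := myIntMul hf hi
  have I5 : Integrable (fun ω => g ω * h ω) P := myIntMul hg hh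
  have I6 : Integrable (fun ω => g ω * i ω) P := myIntMul hg hi
  rw [integral_sub I1 I2, integral_sub I3 I4, integral_sub I5 I6]
  ring

section MBRW
variable {Ω : Type} [MeasurableSpace Ω] {P : Measure Ω} {N n : ℕ} {bn : ℕ → ℤ × ℤ → Ω → ℝ}

lemma b_memL2 (h : IsMBRWBase P N n bn) {k : ℕ} (hk : k ≤ n) {v : ℤ × ℤ}
    (hv : v ∈ V N) : MemLp (bn k v) 2 P := by
  obtain ⟨hmeas, -, hcov⟩ := h
  have hc := hcov k k v v hk hk hv hv
  rw [if_pos ⟨rfl, rfl⟩] at hc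
  have hint : Integrable (fun ω => bn k v ω * bn k v ω) P := by
    by_contra hni
    rw [MeasureTheory.integral_undef hni] at hc
    have h0 : (0:ℝ) < ((2:ℝ)^(2*k))⁻¹ := by positivity
    rw [← hc] at h0; exact lt_irrefl _ h0
  rw [memLp_two_iff_integrable_sq (hmeas k hk v hv).aestronglyMeasurable]
  simpa [sq] using hint

lemma L_memL2 (h : IsMBRWBase P N n bn) (hN : 0 < N) {k : ℕ} (hk : k ≤ n) (z : ℤ × ℤ) :
    MemLp (Lfn N bn k z) 2 P := by
  exact memLp_finset_sum _ fun v _ => b_memL2 h hk (modN_mem_V hN v)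

lemma covL (h : IsMBRWBase P N n bn) (hN : 0 < N) {k k' : ℕ} (hk : k ≤ n) (hk' : k' ≤ n)
    (z z' : ℤ × ℤ) :
    ∫ ω, Lfn N bn k z ω * Lfn N bn k' z' ω ∂P
      = ∑ v ∈ corners k z, ∑ v' ∈ corners k' z',
          (if k = k' ∧ modN N v = modN N v' then ((2:ℝ)^(2*k))⁻¹ else 0) := by
  have h1 := myExpand (corners k z) (corners k' z') (fun v ω => bn k (modN N v) ω)
    (fun v' ω => bn k' (modN N v') ω)
    (fun v _ => b_memL2 h hk (modN_mem_V hN v))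
    (fun v' _ => b_memL2 h hk' (modN_mem_V hN v'))
  rw [show (∫ ω, Lfn N bn k z ω * Lfn N bn k' z' ω ∂P)
    = ∫ ω, (∑ v ∈ corners k z, bn k (modN N v) ω) * (∑ v' ∈ corners k' z', bn k' (modN N v') ω) ∂P
    from rfl, h1]
  exact Finset.sum_congr rfl fun v _ => Finset.sum_congr rfl fun v' _ =>
    h.2.2 k k' (modN N v) (modN N v') hk hk' (modN_mem_V hN v) (modN_mem_V hN v')

lemma covL_self (h : IsMBRWBase P N n bn) (hN : 0 < N) {k : ℕ} (hN2 : (2:ℤ)^k ≤ (N:ℤ))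
    (hk : k ≤ n) (z : ℤ × ℤ) :
    ∫ ω, Lfn N bn k z ω * Lfn N bn k z ω ∂P = 1 := by
  rw [covL h hN hk hk z z]
  have hs : ∀ v ∈ corners k z,
      (∑ v' ∈ corners k z, if k = k ∧ modN N v = modN N v' then ((2:ℝ)^(2*k))⁻¹ else 0)
        = ((2:ℝ)^(2*k))⁻¹ := by
    intro v hv
    have h2 : ∀ v' ∈ corners k z,
        (if k = k ∧ modN N v = modN N v' then ((2:ℝ)^(2*k))⁻¹ else 0)
          = (if v = v' then ((2:ℝ)^(2*k))⁻¹ else 0) := by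
      intro v' hv'
      refine if_congr ⟨fun hc => modN_inj_corners hN2 hv hv' hc.2, fun hc => ⟨rfl, by rw [hc]⟩⟩ rfl rfl
    rw [Finset.sum_congr rfl h2, Finset.sum_ite_eq _ v _, if_pos hv]
  rw [Finset.sum_congr rfl hs, Finset.sum_const, card_corners, nsmul_eq_mul]
  have hne : ((2:ℝ)^k) ≠ 0 := by positivity
  push_cast
  rw [two_mul, pow_add]
  field_simp

end MBRW

/-- **Gain from truncation at well-separated points.** There is `g : ℕ → ℝ₊` with
`g(k₀) → ∞` such that, for all `n > k₀`, `N = 2^n` and `x, y ∈ V_N` with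
`d^N(x,y) ≥ 2^{√k₀}`, one has `ρ_{N,k₀}(x,y) ≤ ρ_{N,0}(x,y) - g(k₀)`, where
`ρ_{N,k₀}(x,y) = E[(S_x^{N,k₀} - S_y^{N,k₀})²]`. -/
theorem rho_truncation_gain {Ω : Type} [MeasurableSpace Ω]
    (P : Measure Ω) [IsProbabilityMeasure P] (b : ℕ → ℕ → ℤ × ℤ → Ω → ℝ)
    (hb : ∀ n : ℕ, IsMBRWBase P (2 ^ n) n (b n)) :
    ∃ g : ℕ → ℝ, (∀ k₀ : ℕ, 0 ≤ g k₀) ∧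
      Filter.Tendsto g Filter.atTop Filter.atTop ∧
      ∀ k₀ n : ℕ, k₀ < n → ∀ x ∈ V (2 ^ n), ∀ y ∈ V (2 ^ n),
        (2 : ℝ) ^ (Real.sqrt k₀) ≤ dN (2 ^ n) x y →
        ∫ ω, (mbrwSum (2 ^ n) k₀ n (b n) x ω - mbrwSum (2 ^ n) k₀ n (b n) y ω) ^ 2 ∂P
          ≤ (∫ ω,
              (mbrwSum (2 ^ n) 0 n (b n) x ω - mbrwSum (2 ^ n) 0 n (b n) y ω) ^ 2 ∂P)
            - g k₀ := by
  refine ⟨fun k₀ => 2 * (Nat.sqrt k₀ : ℝ), fun k₀ => by positivity, ?_, ?_⟩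
  · have h1 : Filter.Tendsto (fun k₀ : ℕ => Nat.sqrt k₀) Filter.atTop Filter.atTop :=
      Filter.tendsto_atTop_atTop_of_monotone (fun a b hab => Nat.sqrt_le_sqrt hab)
        (fun m => ⟨m^2, (Nat.sqrt_eq' m).ge⟩)
    have h2 : Filter.Tendsto (fun k₀ : ℕ => (Nat.sqrt k₀ : ℝ)) Filter.atTop Filter.atTop :=
      tendsto_natCast_atTop_atTop.comp h1
    exact h2.const_mul_atTop two_pos
  · intro k₀ n hk₀n x hx y hy hdist
    have hN : 0 < 2^n := pow_pos (by norm_num) n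
    have hZ : ∀ k : ℕ, k ≤ n → (2:ℤ)^k ≤ ((2^n : ℕ) : ℤ) := by
      intro k hk; push_cast; exact pow_le_pow_right₀ one_le_two hk
    have hmem : ∀ k : ℕ, k ≤ n → ∀ z : ℤ × ℤ, MemLp (Lfn (2^n) (b n) k z) 2 P :=
      fun k hk z => L_memL2 (hb n) hN hk z
    set F : ℕ → Ω → ℝ := fun k ω => Lfn (2^n) (b n) k x ω - Lfn (2^n) (b n) k y ω with hF
    have hFmem : ∀ k : ℕ, k ≤ n → MemLp (F k) 2 P := fun k hk => (hmem k hk x).sub (hmem k hk y)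
    have crossL : ∀ k k' : ℕ, k ≤ n → k' ≤ n → k ≠ k' → ∀ z z' : ℤ × ℤ,
        ∫ ω, Lfn (2^n) (b n) k z ω * Lfn (2^n) (b n) k' z' ω ∂P = 0 := by
      intro k k' hk hk' hne z z'
      rw [covL (hb n) hN hk hk' z z']
      exact Finset.sum_eq_zero fun v _ => Finset.sum_eq_zero fun v' _ =>
        if_neg fun hc => hne hc.1
    have key : ∀ lo : ℕ,
        ∫ ω, (∑ k ∈ Finset.Icc lo n, F k ω) * (∑ k ∈ Finset.Icc lo n, F k ω) ∂P
          = ∑ k ∈ Finset.Icc lo n, ∫ ω, F k ω * F k ω ∂P := by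
      intro lo
      rw [myExpand (Finset.Icc lo n) (Finset.Icc lo n) F F
        (fun k hk => hFmem k (Finset.mem_Icc.1 hk).2) (fun k hk => hFmem k (Finset.mem_Icc.1 hk).2)]
      refine Finset.sum_congr rfl fun k hk => ?_
      refine Finset.sum_eq_single_of_mem k hk (fun k' hk' hne => ?_)
      have h1 : k' ≤ n := (Finset.mem_Icc.1 hk').2
      have h0 : k ≤ n := (Finset.mem_Icc.1 hk).2
      simp only [hF]
      rw [covDelta (hmem k h0 x) (hmem k h0 y) (hmem k' h1 x) (hmem k' h1 y),
        crossL k k' h0 h1 (fun hh => hne hh.symm) x x,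
        crossL k k' h0 h1 (fun hh => hne hh.symm) x y,
        crossL k k' h0 h1 (fun hh => hne hh.symm) y x,
        crossL k k' h0 h1 (fun hh => hne hh.symm) y y]
      ring
    have tval : ∀ k : ℕ, k + 1 ≤ Nat.sqrt k₀ → ∫ ω, F k ω * F k ω ∂P = 2 := by
      intro k hk1
      have hkn : k ≤ n := by
        have h1 := Nat.sqrt_le_self k₀; omega
      have hdk : (2:ℝ)^(k+1) ≤ dN (2^n) x y := by
        refine le_trans ?_ hdist
        have h2 : ((Nat.sqrt k₀ : ℕ) : ℝ) ≤ Real.sqrt k₀ := by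
          rw [Real.le_sqrt (by positivity) (by positivity)]
          exact_mod_cast Nat.sqrt_le' k₀
        calc (2:ℝ)^(k+1) = (2:ℝ) ^ ((k+1 : ℕ) : ℝ) := (Real.rpow_natCast 2 (k+1)).symm
          _ ≤ (2:ℝ) ^ Real.sqrt (k₀ : ℝ) := by
              apply Real.rpow_le_rpow_of_exponent_le one_le_two
              have h3 : ((k+1 : ℕ) : ℝ) ≤ ((Nat.sqrt k₀ : ℕ) : ℝ) := by exact_mod_cast hk1
              linarith
      simp only [hF]
      rw [covDelta (hmem k hkn x) (hmem k hkn y) (hmem k hkn x) (hmem k hkn y),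
        covL_self (hb n) hN (hZ k hkn) hkn x, covL_self (hb n) hN (hZ k hkn) hkn y]
      have hxy : ∫ ω, Lfn (2^n) (b n) k x ω * Lfn (2^n) (b n) k y ω ∂P = 0 := by
        rw [covL (hb n) hN hkn hkn x y]
        exact Finset.sum_eq_zero fun v hv => Finset.sum_eq_zero fun v' hv' =>
          if_neg fun hc => noOverlap hdk hv hv' hc.2
      have hyx : ∫ ω, Lfn (2^n) (b n) k y ω * Lfn (2^n) (b n) k x ω ∂P = 0 := by
        rw [covL (hb n) hN hkn hkn y x]
        exact Finset.sum_eq_zero fun v hv => Finset.sum_eq_zero fun v' hv' =>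
          if_neg fun hc => noOverlap hdk hv' hv hc.2.symm
      rw [hxy, hyx]; norm_num
    have tnonneg : ∀ k : ℕ, 0 ≤ ∫ ω, F k ω * F k ω ∂P :=
      fun k => integral_nonneg fun ω => mul_self_nonneg _
    have hrw : ∀ lo : ℕ,
        (fun ω => (mbrwSum (2^n) lo n (b n) x ω - mbrwSum (2^n) lo n (b n) y ω)^2)
          = fun ω => (∑ k ∈ Finset.Icc lo n, F k ω) * (∑ k ∈ Finset.Icc lo n, F k ω) := by
      intro lo; funext ω
      have hs : ∑ k ∈ Finset.Icc lo n, F k ω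
          = (∑ k ∈ Finset.Icc lo n, Lfn (2^n) (b n) k x ω)
            - ∑ k ∈ Finset.Icc lo n, Lfn (2^n) (b n) k y ω := by
        simp only [hF]; exact Finset.sum_sub_distrib _ _
      rw [pow_two, hs]
      rfl
    rw [hrw k₀, hrw 0, key k₀, key 0]
    have hsplit : ∑ k ∈ Finset.Icc 0 n, ∫ ω, F k ω * F k ω ∂P
        = (∑ k ∈ Finset.Ico 0 k₀, ∫ ω, F k ω * F k ω ∂P)
          + ∑ k ∈ Finset.Icc k₀ n, ∫ ω, F k ω * F k ω ∂P := by
      simp only [← Finset.Ico_add_one_right_eq_Icc]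
      exact (Finset.sum_Ico_consecutive _ (Nat.zero_le k₀) (by omega)).symm
    have hlow : 2 * ((Nat.sqrt k₀ : ℕ) : ℝ) ≤ ∑ k ∈ Finset.Ico 0 k₀, ∫ ω, F k ω * F k ω ∂P := by
      have hsub : Finset.Ico 0 (Nat.sqrt k₀) ⊆ Finset.Ico 0 k₀ :=
        Finset.Ico_subset_Ico le_rfl (Nat.sqrt_le_self k₀)
      have h1 : ∀ k ∈ Finset.Ico 0 (Nat.sqrt k₀), ∫ ω, F k ω * F k ω ∂P = 2 := by
        intro k hk
        exact tval k (by have := (Finset.mem_Ico.1 hk).2; omega)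
      have h2 : ∑ k ∈ Finset.Ico 0 (Nat.sqrt k₀), ∫ ω, F k ω * F k ω ∂P
          = 2 * ((Nat.sqrt k₀ : ℕ) : ℝ) := by
        rw [Finset.sum_congr rfl h1, Finset.sum_const, Nat.card_Ico, nsmul_eq_mul, Nat.sub_zero]
        ring
      calc 2 * ((Nat.sqrt k₀ : ℕ) : ℝ)
          = ∑ k ∈ Finset.Ico 0 (Nat.sqrt k₀), ∫ ω, F k ω * F k ω ∂P := h2.symm
        _ ≤ ∑ k ∈ Finset.Ico 0 k₀, ∫ ω, F k ω * F k ω ∂P :=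
            Finset.sum_le_sum_of_subset_of_nonneg hsub (fun i _ _ => tnonneg i)
    beta_reduce
    linarith [hsplit, hlow]

end
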